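/- If A ⊆ 2^ω is E_0-independent and has the Baire property, then A is meager; hence the Baire-measurable chromatic number of E_0 is uncountable: 2^ω is not the union of countably many Baire-measurable E_0-independent sets. -/

import Mathlib

/-- The relation `E₀` on Cantor space `2^ω`: eventual agreement. -/
def E0 (x y : ℕ → Bool) : Prop := {n : ℕ | x n ≠ y n}.Finite

/-- A set `A ⊆ 2^ω` is `E₀`-independent if no two distinct elements of `A`
are `E₀`-related. -/
def E0Independent (A : Set (ℕ → Bool)) : Prop :=
  ∀ x ∈ A, ∀ y ∈ A, x ≠ y → ¬ E0 x y

/-- Flipping the `n`-th bit, as a homeomorphism of Cantor space. -/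
def flipBit (n : ℕ) : (ℕ → Bool) ≃ₜ (ℕ → Bool) where
  toFun x := fun i => if i = n then !(x i) else x i
  invFun x := fun i => if i = n then !(x i) else x i
  left_inv x := by funext i; by_cases h : i = n <;> simp [h]
  right_inv x := by funext i; by_cases h : i = n <;> simp [h]
  continuous_toFun := by
    apply continuous_pi
    intro i
    by_cases h : i = n
    · subst h
      simpa [Function.comp_def] using (continuous_of_discreteTopology (f := Bool.not)).comp (continuous_apply i)
    · simpa [h] using continuous_apply i
  continuous_invFun := by
    apply continuous_pi
    intro i
    by_cases h : i = n
    · subst h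
      simpa [Function.comp_def] using (continuous_of_discreteTopology (f := Bool.not)).comp (continuous_apply i)
    · simpa [h] using continuous_apply i

@[simp] lemma flipBit_apply (n : ℕ) (x : ℕ → Bool) (i : ℕ) :
    flipBit n x i = if i = n then !(x i) else x i := rfl

lemma key_meagre (A : Set (ℕ → Bool)) (hBM : BaireMeasurableSet A)
    (hInd : E0Independent A) : IsMeagre A := by
  classical
  obtain ⟨u, huo, hAu⟩ := hBM.residualEq_isOpen
  -- D : the (meager) set where A and u differ
  set w : Set (ℕ → Bool) := {x | (x ∈ A) = (x ∈ u)} with hw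
  have hwres : w ∈ residual _ := hAu
  have hD : IsMeagre wᶜ := by simpa [IsMeagre, compl_compl] using hwres
  rcases Set.eq_empty_or_nonempty u with rfl | ⟨x₀, hx₀⟩
  · -- A differs from ∅ by a meager set, so A is meager
    refine hD.mono fun x hx => ?_
    simp only [Set.mem_compl_iff, hw, Set.mem_setOf_eq, eq_iff_iff]
    simp only [Set.mem_empty_iff_false, iff_false]
    simpa using hx
  · exfalso
    -- find a basic cylinder around x₀ inside u
    have hu_nhds : u ∈ nhds x₀ := huo.mem_nhds hx₀
    rw [nhds_pi, Filter.mem_pi'] at hu_nhds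
    obtain ⟨I, t, ht, htu⟩ := hu_nhds
    set C : Set (ℕ → Bool) := Set.pi (↑I) (fun i => {x₀ i}) with hC
    have hCu : C ⊆ u := by
      refine fun y hy => htu fun i hi => ?_
      have := hy i hi
      simp only [Set.mem_singleton_iff] at this
      rw [this]
      exact mem_of_mem_nhds (ht i)
    have hCopen : IsOpen C :=
      isOpen_set_pi I.finite_toSet fun i _ => isOpen_discrete _
    have hx₀C : x₀ ∈ C := fun i _ => rfl
    -- pick a coordinate outside the support
    obtain ⟨n, hn⟩ : ∃ n : ℕ, n ∉ (I : Set ℕ) :=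
      (Set.Finite.infinite_compl I.finite_toSet).nonempty
    set φ := flipBit n with hφ
    have hφC : ∀ y ∈ C, φ y ∈ C := by
      intro y hy i hi
      have hin : i ≠ n := fun h => hn (h ▸ hi)
      have := hy i hi
      simp only [Set.mem_singleton_iff] at this
      simp [hφ, flipBit_apply, hin, this]
    -- the bad set
    have hM : IsMeagre (wᶜ ∪ φ ⁻¹' wᶜ) := by
      rw [IsMeagre, Set.compl_union]
      exact Filter.inter_mem (by simpa [IsMeagre, compl_compl] using hD)
        (by simpa [IsMeagre] using
          hD.preimage_of_isOpenMap φ.continuous φ.isOpenMap)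
    -- C is not contained in a meager set
    have hnotsub : ¬ C ⊆ (wᶜ ∪ φ ⁻¹' wᶜ) := by
      intro hsub
      have hCm : IsMeagre C := hM.mono hsub
      have hd : Dense Cᶜ := dense_of_mem_residual hCm
      obtain ⟨y, hy1, hy2⟩ := hd.inter_open_nonempty C hCopen ⟨x₀, hx₀C⟩
      exact hy2 hy1
    obtain ⟨x, hxC, hxM⟩ := Set.not_subset.mp hnotsub
    simp only [Set.mem_union, not_or, Set.mem_preimage, Set.mem_compl_iff, not_not] at hxM
    obtain ⟨hxw, hφxw⟩ := hxM
    have hxA : x ∈ A := by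
      have : (x ∈ A) = (x ∈ u) := hxw
      rw [this]; exact hCu hxC
    have hφxA : φ x ∈ A := by
      have : (φ x ∈ A) = (φ x ∈ u) := hφxw
      rw [this]; exact hCu (hφC x hxC)
    have hne : x ≠ φ x := by
      intro h
      have : x n = !(x n) := by
        conv_lhs => rw [h]
        simp [hφ, flipBit_apply]
      simp at this
    have hE0 : E0 x (φ x) := by
      apply Set.Finite.subset (Set.finite_singleton n)
      intro i hi
      simp only [Set.mem_setOf_eq] at hi
      by_contra hin
      simp only [Set.mem_singleton_iff] at hin
      exact hi (by simp [hφ, flipBit_apply, hin])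
    exact hInd x hxA (φ x) hφxA hne hE0

/-- Baire-measurable `E₀`-independent sets are meager; hence Cantor space is
not the union of countably many Baire-measurable `E₀`-independent sets, so the
Baire-measurable chromatic number of `E₀` is uncountable. -/
theorem E0_Baire_chromatic_uncountable :
    (∀ A : Set (ℕ → Bool), BaireMeasurableSet A → E0Independent A → IsMeagre A) ∧
    ¬ ∃ A : ℕ → Set (ℕ → Bool),
        (∀ n, BaireMeasurableSet (A n) ∧ E0Independent (A n)) ∧
        (⋃ n, A n) = Set.univ := by
  refine ⟨key_meagre, ?_⟩
  rintro ⟨A, hA, hcover⟩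
  have hmeagre : IsMeagre (⋃ n, A n) :=
    isMeagre_iUnion fun n => key_meagre (A n) (hA n).1 (hA n).2
  rw [hcover] at hmeagre
  have : Dense (Set.univ : Set (ℕ → Bool))ᶜ := dense_of_mem_residual hmeagre
  simp only [Set.compl_univ] at this
  simpa using this.nonempty
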